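/- If v ∈ ℝⁿ satisfies K_I v + Σ_{i=1}^n e_i k_i tanh(μ_i v_i) = 0, then v = 0. (This is the characterization of the largest invariant set in LaSalle's argument: the shaped potential force vanishes only at the desired configuration.) -/

import Mathlib

open Matrix

lemma tanh_mul_self_nonneg (x : ℝ) : 0 ≤ Real.tanh x * x := by
  rcases le_total 0 x with h | h
  · have : 0 ≤ Real.tanh x := by
      rw [Real.tanh_eq_sinh_div_cosh]
      exact div_nonneg (Real.sinh_nonneg_iff.mpr h) (Real.cosh_pos x).le
    exact mul_nonneg this h
  · have h' : Real.tanh x ≤ 0 := by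
      rw [Real.tanh_eq_sinh_div_cosh]
      exact div_nonpos_of_nonpos_of_nonneg (Real.sinh_nonpos_iff.mpr h) (Real.cosh_pos x).le
    nlinarith

lemma dot_sum_single {n : ℕ} (c v : Fin n → ℝ) :
    v ⬝ᵥ (∑ i, c i • (Pi.single i 1 : Fin n → ℝ)) = ∑ i, c i * v i := by
  simp only [dotProduct, Finset.sum_apply, Pi.smul_apply, smul_eq_mul, Finset.mul_sum]
  rw [Finset.sum_comm]
  congr 1; ext i
  simp [Pi.single_apply, mul_comm]

/-- if `K_I v + Σᵢ eᵢ kᵢ tanh(μᵢ vᵢ) = 0` with `K_I` symmetric positive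
definite, `kᵢ ≥ 0` and `μᵢ > 0`, then `v = 0`. -/
theorem shaped_force_vanishes_only_at_origin {n : ℕ} (hn : 1 ≤ n)
    (KI : Matrix (Fin n) (Fin n) ℝ) (hKI : KI.PosDef)
    (k μ : Fin n → ℝ) (hk : ∀ i, 0 ≤ k i) (hμ : ∀ i, 0 < μ i)
    (v : Fin n → ℝ)
    (hv : KI *ᵥ v + ∑ i, (k i * Real.tanh (μ i * v i)) • (Pi.single i 1 : Fin n → ℝ) = 0) :
    v = 0 := by
  by_contra hne
  have hquad : 0 < v ⬝ᵥ (KI *ᵥ v) := by simpa using hKI.dotProduct_mulVec_pos hne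
  have hsum : 0 ≤ ∑ i, (k i * Real.tanh (μ i * v i)) * v i := by
    apply Finset.sum_nonneg
    intro i _
    have h1 : 0 ≤ Real.tanh (μ i * v i) * (μ i * v i) := tanh_mul_self_nonneg _
    have h2 : 0 ≤ Real.tanh (μ i * v i) * v i := by nlinarith [hμ i]
    have := mul_nonneg (hk i) h2
    linarith [mul_assoc (k i) (Real.tanh (μ i * v i)) (v i) ▸ this]
  have h0 : v ⬝ᵥ (KI *ᵥ v) + ∑ i, (k i * Real.tanh (μ i * v i)) * v i = 0 := by
    rw [← dot_sum_single (fun i => k i * Real.tanh (μ i * v i)) v, ← dotProduct_add, hv,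
      dotProduct_zero]
  linarith
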